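/- For a prediction matrix in which individual 1 has deterministic label distribution supported on {label 1, label 3} with probability 1/2 each, and individuals 2 through n deterministically have label 2, the UA ranking places individual 1 at the last position n with probability exactly 1/2; whereas if individual 1 deterministically has label 1 it is placed last with probability 1. Consequently, the UA ranking function is not γ-stable for any γ < 1/2 when L ≥ 3 and n ≥ 2. -/

import Mathlib

open Finset

/-- An `n × L` matrix is row-stochastic (a prediction matrix) if every row is a
probability distribution over the `L` labels. Labels are ordered: a higher
index in `Fin L` is a better label. -/
def rowStochastic {n L : ℕ} (P : Fin n → Fin L → ℝ) : Prop :=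
  (∀ i ℓ, 0 ≤ P i ℓ) ∧ ∀ i, ∑ ℓ, P i ℓ = 1

/-- `N^{>ℓ}`: the number of individuals whose label is strictly better than `ℓ`
under the label assignment `lam`. -/
def nGT {n L : ℕ} (lam : Fin n → Fin L) (ℓ : Fin L) : ℕ :=
  (Finset.univ.filter fun j => ℓ < lam j).card

/-- `N^{=ℓ}`: the number of individuals whose label equals `ℓ`. -/
def nEQ {n L : ℕ} (lam : Fin n → Fin L) (ℓ : Fin L) : ℕ :=
  (Finset.univ.filter fun j => lam j = ℓ).card

/-- `N^{>ℓ}_{−i}`: the number of individuals other than `i` whose label is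
strictly better than `ℓ`. -/
def nGTm {n L : ℕ} (lam : Fin n → Fin L) (i : Fin n) (ℓ : Fin L) : ℕ :=
  ((Finset.univ.erase i).filter fun j => ℓ < lam j).card

/-- `N^{=ℓ}_{−i}`: the number of individuals other than `i` whose label equals
`ℓ`. -/
def nEQm {n L : ℕ} (lam : Fin n → Fin L) (i : Fin n) (ℓ : Fin L) : ℕ :=
  ((Finset.univ.erase i).filter fun j => lam j = ℓ).card

/-- Conditioned on the full label assignment `lam`, the probability that
individual `i` receives (0-indexed) rank `k` when individuals are sorted by
decreasing label with uniform tie-breaking: it is `1 / N^{=λᵢ}` if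
`N^{>λᵢ} ≤ k < N^{>λᵢ} + N^{=λᵢ}` and `0` otherwise. -/
noncomputable def condRank {n L : ℕ} (lam : Fin n → Fin L) (i k : Fin n) : ℝ :=
  if nGT lam (lam i) ≤ k.val ∧ k.val < nGT lam (lam i) + nEQ lam (lam i)
  then ((nEQ lam (lam i) : ℝ))⁻¹ else 0

/-- The uncertainty aware (UA) ranking function: `rUA P i k` is the probability
that individual `i` receives rank `k` when labels `λ_j ∼ P j` are drawn
independently and individuals are ranked by decreasing label with uniform
tie-breaking. -/
noncomputable def rUA {n L : ℕ} (P : Fin n → Fin L → ℝ) : Fin n → Fin n → ℝ :=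
  fun i k => ∑ lam : Fin n → Fin L, (∏ j, P j (lam j)) * condRank lam i k

/-- The probability, under the UA ranking for prediction matrix `P`, that
individual `i` receives rank `k`, conditioned on `λ_i = ℓ` (the labels of the
other individuals being drawn independently from the rows of `P`). -/
noncomputable def condProbGiven {n L : ℕ} (P : Fin n → Fin L → ℝ)
    (i k : Fin n) (ℓ : Fin L) : ℝ :=
  ∑ lam : Fin n → Fin L,
    if lam i = ℓ then (∏ j ∈ Finset.univ.erase i, P j (lam j)) * condRank lam i k
    else 0

/-- With `n ≥ 2` individuals and `L ≥ 3` labels, consider the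
prediction matrix `P` in which individual `0` has label `1` (worst) or label
`3` (index `2`) with probability `1/2` each and all other individuals
deterministically have label `2` (index `1`), and the matrix `P'` which is
identical except individual `0` deterministically has the worst label. Then
the UA ranking places individual `0` in the last position with probability
exactly `1/2` under `P` and probability `1` under `P'`; consequently, the UA
ranking function is not `γ`-stable for any `γ < 1/2`. -/
theorem rUA_stability_lower_bound
    (n L : ℕ) (hn : 2 ≤ n) (hL : 3 ≤ L) :
    rUA (fun j ℓ => if j = (⟨0, by omega⟩ : Fin n)
          then (if ℓ.val = 0 ∨ ℓ.val = 2 then (1 / 2 : ℝ) else 0)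
          else (if ℓ.val = 1 then (1 : ℝ) else 0) : Fin n → Fin L → ℝ)
        ⟨0, by omega⟩ ⟨n - 1, by omega⟩ = 1 / 2 ∧
    rUA (fun j ℓ => if j = (⟨0, by omega⟩ : Fin n)
          then (if ℓ.val = 0 then (1 : ℝ) else 0)
          else (if ℓ.val = 1 then (1 : ℝ) else 0) : Fin n → Fin L → ℝ)
        ⟨0, by omega⟩ ⟨n - 1, by omega⟩ = 1 ∧
    ∀ γ : ℝ, γ < 1 / 2 →
      ¬ (∀ P Q : Fin n → Fin L → ℝ, rowStochastic P → rowStochastic Q →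
          ∀ i k : Fin n, |rUA P i k - rUA Q i k| ≤ γ * ∑ a, ∑ ℓ, |P a ℓ - Q a ℓ|) := by
  classical
  have h0 : 0 < n := by omega
  have h0L : 0 < L := by omega
  have h1L : 1 < L := by omega
  have h2L : 2 < L := by omega
  set i0 : Fin n := ⟨0, h0⟩ with hi0
  set kk : Fin n := ⟨n - 1, by omega⟩ with hkk
  set e0 : Fin L := ⟨0, h0L⟩ with he0
  set e1 : Fin L := ⟨1, h1L⟩ with he1
  set e2 : Fin L := ⟨2, h2L⟩ with he2
  set lamA : Fin n → Fin L := fun j => if j = i0 then e0 else e1 with hlamA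
  set lamC : Fin n → Fin L := fun j => if j = i0 then e2 else e1 with hlamC
  set P : Fin n → Fin L → ℝ := fun j ℓ => if j = i0
      then (if ℓ.val = 0 ∨ ℓ.val = 2 then (1 / 2 : ℝ) else 0)
      else (if ℓ.val = 1 then (1 : ℝ) else 0) with hPdef
  set Q : Fin n → Fin L → ℝ := fun j ℓ => if j = i0
      then (if ℓ.val = 0 then (1 : ℝ) else 0)
      else (if ℓ.val = 1 then (1 : ℝ) else 0) with hQdef
  -- condRank computations
  have hA0 : lamA i0 = e0 := by simp [hlamA]
  have hC0 : lamC i0 = e2 := by simp [hlamC]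
  have hGTA : nGT lamA e0 = n - 1 := by
    unfold nGT
    have hset : (Finset.univ.filter fun j => e0 < lamA j) = Finset.univ.erase i0 := by
      ext j
      by_cases h : j = i0 <;> simp [hlamA, h, Fin.lt_def, he0, he1]
    rw [hset, Finset.card_erase_of_mem (Finset.mem_univ _), Finset.card_univ, Fintype.card_fin]
  have hEQA : nEQ lamA e0 = 1 := by
    unfold nEQ
    have hset : (Finset.univ.filter fun j => lamA j = e0) = {i0} := by
      ext j
      by_cases h : j = i0
      · simp [hlamA, h]
      · have h' : (j : ℕ) ≠ 0 := fun hh => h (Fin.ext (by simpa [hi0] using hh))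
        simp [hlamA, h, Fin.ext_iff, he0, he1, h', hi0]
    rw [hset, Finset.card_singleton]
  have hcondA : condRank lamA i0 kk = 1 := by
    rw [condRank, hA0, hGTA, hEQA, if_pos]
    · norm_num
    · refine ⟨le_refl _, ?_⟩
      simp [hkk]
  have hGTC : nGT lamC e2 = 0 := by
    unfold nGT
    have hset : (Finset.univ.filter fun j => e2 < lamC j) = ∅ := by
      ext j
      by_cases h : j = i0 <;> simp [hlamC, h, Fin.lt_def, he1, he2]
    simp [hset]
  have hEQC : nEQ lamC e2 = 1 := by
    unfold nEQ
    have hset : (Finset.univ.filter fun j => lamC j = e2) = {i0} := by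
      ext j
      by_cases h : j = i0
      · simp [hlamC, h]
      · have h' : (j : ℕ) ≠ 0 := fun hh => h (Fin.ext (by simpa [hi0] using hh))
        simp [hlamC, h, Fin.ext_iff, he1, he2, h', hi0]
    rw [hset, Finset.card_singleton]
  have hcondC : condRank lamC i0 kk = 0 := by
    rw [condRank, hC0, hGTC, hEQC, if_neg]
    simp [hkk]
    omega
  -- products on the support
  have hprodQA : (∏ j, Q j (lamA j)) = 1 := by
    apply Finset.prod_eq_one
    intro j _
    by_cases h : j = i0 <;> simp [hQdef, hlamA, h, he0, he1]
  have hprodPA : (∏ j, P j (lamA j)) = 1 / 2 := by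
    rw [← Finset.mul_prod_erase Finset.univ _ (Finset.mem_univ i0)]
    have h1 : P i0 (lamA i0) = 1 / 2 := by simp [hPdef, hlamA, he0]
    have h2 : (∏ j ∈ Finset.univ.erase i0, P j (lamA j)) = 1 := by
      apply Finset.prod_eq_one
      intro j hj
      have hj' : j ≠ i0 := (Finset.mem_erase.mp hj).1
      simp [hPdef, hlamA, hj', he1]
    rw [h1, h2, mul_one]
  have hprodPC : (∏ j, P j (lamC j)) = 1 / 2 := by
    rw [← Finset.mul_prod_erase Finset.univ _ (Finset.mem_univ i0)]
    have h1 : P i0 (lamC i0) = 1 / 2 := by simp [hPdef, hlamC, he2]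
    have h2 : (∏ j ∈ Finset.univ.erase i0, P j (lamC j)) = 1 := by
      apply Finset.prod_eq_one
      intro j hj
      have hj' : j ≠ i0 := (Finset.mem_erase.mp hj).1
      simp [hPdef, hlamC, hj', he1]
    rw [h1, h2, mul_one]
  -- vanishing off the support
  have hQzero : ∀ lam : Fin n → Fin L, lam ≠ lamA → (∏ j, Q j (lam j)) = 0 := by
    intro lam hlam
    have hex : ∃ j, lam j ≠ lamA j := by
      by_contra hc
      push_neg at hc
      exact hlam (funext hc)
    obtain ⟨j, hj⟩ := hex
    apply Finset.prod_eq_zero (Finset.mem_univ j)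
    by_cases hji : j = i0
    · have hjA : lamA j = e0 := by simp [hlamA, hji]
      rw [hjA] at hj
      have hv : (lam j).val ≠ 0 := fun h => hj (Fin.ext (by simpa [he0] using h))
      have hv' : (lam i0).val ≠ 0 := hji ▸ hv
      simp [hQdef, hji, hv, hv']
    · have hj1 : lam j ≠ e1 := by simpa [hlamA, hji] using hj
      have : (lam j).val ≠ 1 := by
        intro h; exact hj1 (Fin.ext h)
      simp [hQdef, hji, this]
  have hPzero : ∀ lam : Fin n → Fin L, lam ≠ lamA → lam ≠ lamC →
      (∏ j, P j (lam j)) = 0 := by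
    intro lam hlam1 hlam2
    by_cases hex : ∃ j, j ≠ i0 ∧ lam j ≠ e1
    · obtain ⟨j, hji, hj1⟩ := hex
      apply Finset.prod_eq_zero (Finset.mem_univ j)
      have : (lam j).val ≠ 1 := by
        intro h; exact hj1 (Fin.ext h)
      simp [hPdef, hji, this]
    · push_neg at hex
      apply Finset.prod_eq_zero (Finset.mem_univ i0)
      have h02 : lam i0 ≠ e0 := by
        intro h
        apply hlam1
        funext j
        by_cases hji : j = i0
        · subst hji; simp [hlamA, h]
        · simp [hlamA, hji, hex j hji]
      have h22 : lam i0 ≠ e2 := by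
        intro h
        apply hlam2
        funext j
        by_cases hji : j = i0
        · subst hji; simp [hlamC, h]
        · simp [hlamC, hji, hex j hji]
      have hv0 : (lam i0).val ≠ 0 := fun h => h02 (Fin.ext h)
      have hv2 : (lam i0).val ≠ 2 := fun h => h22 (Fin.ext h)
      simp [hPdef, hv0, hv2]
  have hne : lamA ≠ lamC := by
    intro h
    have := congrFun h i0
    rw [hA0, hC0] at this
    simp [Fin.ext_iff, he0, he2] at this
  -- part 1
  have hpart1 : rUA P i0 kk = 1 / 2 := by
    rw [rUA]
    rw [← Finset.sum_subset (Finset.subset_univ ({lamA, lamC} : Finset (Fin n → Fin L)))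
      (by
        intro lam _ hlam
        simp only [Finset.mem_insert, Finset.mem_singleton, not_or] at hlam
        rw [hPzero lam hlam.1 hlam.2, zero_mul])]
    rw [Finset.sum_pair hne, hprodPA, hprodPC, hcondA, hcondC]
    ring
  -- part 2
  have hpart2 : rUA Q i0 kk = 1 := by
    rw [rUA]
    rw [Fintype.sum_eq_single lamA (by
      intro lam hlam
      rw [hQzero lam hlam, zero_mul])]
    rw [hprodQA, hcondA, one_mul]
  refine ⟨hpart1, hpart2, ?_⟩
  -- part 3
  intro γ hγ hstab
  have hrsP : rowStochastic P := by
    constructor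
    · intro i ℓ
      simp only [hPdef]
      split <;> split <;> norm_num
    · intro i
      by_cases h : i = i0
      · subst h
        have hpt : ∀ ℓ : Fin L, P i0 ℓ =
            (if ℓ = e0 then (1 / 2 : ℝ) else 0) + (if ℓ = e2 then (1 / 2 : ℝ) else 0) := by
          intro ℓ
          by_cases h0' : ℓ = e0
          · subst h0'; simp [hPdef, he0, he2, Fin.ext_iff]
          · by_cases h2' : ℓ = e2
            · subst h2'; simp [hPdef, he0, he2, Fin.ext_iff]
            · have hv0 : ℓ.val ≠ 0 := fun h => h0' (Fin.ext h)
              have hv2 : ℓ.val ≠ 2 := fun h => h2' (Fin.ext h)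
              simp [hPdef, hv0, hv2, h0', h2']
        simp_rw [hpt]
        rw [Finset.sum_add_distrib, Finset.sum_ite_eq' Finset.univ e0,
          Finset.sum_ite_eq' Finset.univ e2]
        simp
        norm_num
      · have hpt : ∀ ℓ : Fin L, P i ℓ = (if ℓ = e1 then (1 : ℝ) else 0) := by
          intro ℓ
          by_cases h1' : ℓ = e1
          · subst h1'; simp [hPdef, h, he1]
          · have hv1 : ℓ.val ≠ 1 := fun hh => h1' (Fin.ext hh)
            simp [hPdef, h, hv1, h1']
        simp_rw [hpt]
        rw [Finset.sum_ite_eq' Finset.univ e1]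
        simp
  have hrsQ : rowStochastic Q := by
    constructor
    · intro i ℓ
      simp only [hQdef]
      split <;> split <;> norm_num
    · intro i
      by_cases h : i = i0
      · subst h
        have hpt : ∀ ℓ : Fin L, Q i0 ℓ = (if ℓ = e0 then (1 : ℝ) else 0) := by
          intro ℓ
          by_cases h0' : ℓ = e0
          · subst h0'; simp [hQdef, he0]
          · have hv0 : ℓ.val ≠ 0 := fun hh => h0' (Fin.ext hh)
            simp [hQdef, hv0, h0']
        simp_rw [hpt]
        rw [Finset.sum_ite_eq' Finset.univ e0]
        simp
      · have hpt : ∀ ℓ : Fin L, Q i ℓ = (if ℓ = e1 then (1 : ℝ) else 0) := by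
          intro ℓ
          by_cases h1' : ℓ = e1
          · subst h1'; simp [hQdef, h, he1]
          · have hv1 : ℓ.val ≠ 1 := fun hh => h1' (Fin.ext hh)
            simp [hQdef, h, hv1, h1']
        simp_rw [hpt]
        rw [Finset.sum_ite_eq' Finset.univ e1]
        simp
  have key := hstab P Q hrsP hrsQ i0 kk
  have hL1 : (∑ a, ∑ ℓ, |P a ℓ - Q a ℓ|) = 1 := by
    rw [Fintype.sum_eq_single i0 (by
      intro a ha
      apply Finset.sum_eq_zero
      intro ℓ _
      simp [hPdef, hQdef, ha])]
    have hpt : ∀ ℓ : Fin L, |P i0 ℓ - Q i0 ℓ| =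
        (if ℓ = e0 then (1 / 2 : ℝ) else 0) + (if ℓ = e2 then (1 / 2 : ℝ) else 0) := by
      intro ℓ
      by_cases h0' : ℓ = e0
      · subst h0'
        have : ((0:ℕ) = 0 ∨ (0:ℕ) = 2) := Or.inl rfl
        simp [hPdef, hQdef, he0, he2, Fin.ext_iff]
        norm_num
      · by_cases h2' : ℓ = e2
        · subst h2'
          simp [hPdef, hQdef, he0, he2, Fin.ext_iff]
        · have hv0 : ℓ.val ≠ 0 := fun hh => h0' (Fin.ext hh)
          have hv2 : ℓ.val ≠ 2 := fun hh => h2' (Fin.ext hh)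
          simp [hPdef, hQdef, hv0, hv2, h0', h2']
    simp_rw [hpt]
    rw [Finset.sum_add_distrib, Finset.sum_ite_eq' Finset.univ e0,
      Finset.sum_ite_eq' Finset.univ e2]
    simp
    norm_num
  rw [hpart1, hpart2, hL1, mul_one] at key
  have : |(1 / 2 : ℝ) - 1| = 1 / 2 := by norm_num
  rw [this] at key
  linarith
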